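/- arXiv:0906.4358 — 2 statements merged into one kernel-verified Lean document; each statement's English description precedes it below -/
import Mathlib

section
/- Let D be an integral domain, let n ≥ 2, let a_{i,j} ∈ D for 1 ≤ i ≤ n−1 and 1 ≤ j ≤ n, and let x_1, ..., x_n ∈ D satisfy the homogeneous linear system Σ_{j=1}^n a_{i,j} x_j = 0 for every i = 1, ..., n−1. If det(A_k) ≠ 0 for every k = 1, ..., n−2, then for every k = 2, ..., n−1 and every i = k, ..., n−1 one has Σ_{j=k}^n b^{(k)}_{i,j} x_j = 0; that is, (x_k, ..., x_n) satisfies each of the eliminated systems. -/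
open Matrix Finset

lemma det_updateColumn_finset_sum {R : Type*} [CommRing R] {n : ℕ}
    (A : Matrix (Fin n) (Fin n) R) (j : Fin n) {ι : Type*} [DecidableEq ι]
    (s : Finset ι) (u : ι → Fin n → R) :
    (A.updateCol j (∑ i ∈ s, u i)).det = ∑ i ∈ s, (A.updateCol j (u i)).det := by
  induction s using Finset.induction_on with
  | empty =>
      simp only [Finset.sum_empty]
      exact det_eq_zero_of_column_eq_zero j (fun i => by simp)
  | @insert k t hk ih =>
      rw [Finset.sum_insert hk, Finset.sum_insert hk, det_updateCol_add, ih]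

/-- Elimination in a homogeneous linear system over an integral domain.
`a i j` (for `1 ≤ i ≤ n-1`, `1 ≤ j ≤ n`) are the coefficients, `x 1, …, x n` a solution.
`A_k` is the upper-left `k×k` minor matrix; if all `det A_k ≠ 0` for `k = 1, …, n-2`,
then `(x_k, …, x_n)` solves each eliminated system, whose coefficients `b^{(k)}_{i,j}`
are the determinants of `A_{k-1}` bordered by column `j` and row `i`. -/
theorem eliminated_systems_consistent {D : Type*} [CommRing D] [IsDomain D]
    (n : ℕ) (hn : 2 ≤ n) (a : ℕ → ℕ → D) (x : ℕ → D)
    (hsys : ∀ i, 1 ≤ i → i ≤ n - 1 → ∑ j ∈ Finset.Icc 1 n, a i j * x j = 0)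
    (hdet : ∀ k : ℕ, 1 ≤ k → k ≤ n - 2 →
      (Matrix.of fun r s : Fin k => a (r + 1) (s + 1)).det ≠ 0) :
    ∀ k : ℕ, 2 ≤ k → k ≤ n - 1 → ∀ i : ℕ, k ≤ i → i ≤ n - 1 →
      ∑ j ∈ Finset.Icc k n,
        (Matrix.of fun r s : Fin k =>
          if (r : ℕ) < k - 1 then
            (if (s : ℕ) < k - 1 then a (r + 1) (s + 1) else a (r + 1) j)
          else
            (if (s : ℕ) < k - 1 then a i (s + 1) else a i j)).det * x j = 0 := by
  intro k hk2 hkn i hki hin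
  have hk0 : 0 < k := by omega
  set L : Fin k := ⟨k - 1, by omega⟩ with hL
  set C : Matrix (Fin k) (Fin k) D := Matrix.of fun r s : Fin k =>
      if (r : ℕ) < k - 1 then
        (if (s : ℕ) < k - 1 then a (r + 1) (s + 1) else 0)
      else
        (if (s : ℕ) < k - 1 then a i (s + 1) else 0) with hC
  set v : ℕ → Fin k → D := fun j r => if (r : ℕ) < k - 1 then a (r + 1) j else a i j with hv
  have hM : ∀ j : ℕ, (Matrix.of fun r s : Fin k =>
      if (r : ℕ) < k - 1 then
        (if (s : ℕ) < k - 1 then a (r + 1) (s + 1) else a (r + 1) j)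
      else
        (if (s : ℕ) < k - 1 then a i (s + 1) else a i j)) = C.updateCol L (v j) := by
    intro j
    ext r s
    rcases Nat.lt_or_ge (s : ℕ) (k - 1) with hs | hs
    · have hsL : s ≠ L := by
        intro h
        rw [h] at hs
        simp only [hL] at hs
        omega
      simp [updateCol_apply, hsL, hs, hC]
    · have hsv : (s : ℕ) = k - 1 := by have := s.isLt; omega
      have hsL : s = L := Fin.ext (by simpa [hL] using hsv)
      have hns : ¬ ((s : ℕ) < k - 1) := by omega
      simp [updateCol_apply, hsL, hns, hv, hsv, hL]
  simp only [hM]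
  have hext : ∑ j ∈ Finset.Icc k n, (C.updateCol L (v j)).det * x j
      = ∑ j ∈ Finset.Icc 1 n, (C.updateCol L (v j)).det * x j := by
    refine Finset.sum_subset ?_ ?_
    · intro j hj
      simp only [Finset.mem_Icc] at hj ⊢
      omega
    intro j hj hj'
    simp only [Finset.mem_Icc] at hj
    obtain ⟨hj1, hjn⟩ := hj
    have hjk : j < k := by
      by_contra h
      exact hj' (Finset.mem_Icc.mpr ⟨by omega, hjn⟩)
    have hcol : (C.updateCol L (v j)).det = 0 := by
      refine det_zero_of_column_eq (i := (⟨j - 1, by omega⟩ : Fin k)) (j := L) ?_ ?_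
      · intro h
        have h' : j - 1 = k - 1 := congrArg Fin.val h
        omega
      · intro r
        have h1 : (j - 1 : ℕ) < k - 1 := by omega
        have h2 : ((⟨j - 1, by omega⟩ : Fin k)) ≠ L := by
          intro h
          have h' : j - 1 = k - 1 := congrArg Fin.val h
          omega
        have h3 : j - 1 + 1 = j := by omega
        simp [updateCol_apply, h2, hC, hv, h1, h3]
    rw [hcol, zero_mul]
  rw [hext]
  have hsmul : ∀ j : ℕ, (C.updateCol L (v j)).det * x j
      = (C.updateCol L (x j • v j)).det := by
    intro j
    rw [det_updateCol_smul]
    ring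
  simp only [hsmul]
  rw [← det_updateColumn_finset_sum]
  have hzero : (∑ j ∈ Finset.Icc 1 n, x j • v j) = 0 := by
    funext r
    simp only [Finset.sum_apply, Pi.smul_apply, Pi.zero_apply, smul_eq_mul, hv]
    by_cases hr : (r : ℕ) < k - 1
    · simp only [if_pos hr]
      have h := hsys (r + 1) (by omega) (by omega)
      rw [← h]
      exact Finset.sum_congr rfl fun j _ => mul_comm _ _
    · simp only [if_neg hr]
      have h := hsys i (by omega) hin
      rw [← h]
      exact Finset.sum_congr rfl fun j _ => mul_comm _ _
  rw [hzero]
  exact det_eq_zero_of_column_eq_zero L (fun r => by simp)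
end

section
/- Let G = (g_1, ..., g_m) be a list of nonzero polynomials in R whose list of leading monomials (lt(g_1), ..., lt(g_m)) satisfies the Extended Criterion. If each of S(g_1, g_2), S(g_2, g_3), ..., S(g_{m−1}, g_m) has an S-representation with respect to G, then gcd(lt(g_1), lt(g_m)) = lt(gcd(g_1, g_m)). -/
open MvPolynomial

namespace Paper

variable {n : ℕ} {K : Type*} [Field K]

/-- The leading exponent (exponent of the leading monomial) of a polynomial
with respect to a monomial order. -/
noncomputable def lexp (mo : MonomialOrder (Fin n)) (p : MvPolynomial (Fin n) K) :
    Fin n →₀ ℕ :=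
  mo.toSyn.symm (p.support.sup fun e => mo.toSyn e)

/-- The leading coefficient. -/
noncomputable def lc (mo : MonomialOrder (Fin n)) (p : MvPolynomial (Fin n) K) : K :=
  p.coeff (lexp mo p)

/-- The exponent of σ_{f,g} = lcm(lt f, lt g)/lt f. -/
noncomputable def sigma (mo : MonomialOrder (Fin n)) (f g : MvPolynomial (Fin n) K) :
    Fin n →₀ ℕ :=
  (lexp mo f ⊔ lexp mo g) - lexp mo f

/-- The S-polynomial  S(f,g) = lc(g)·σ_{f,g}·f − lc(f)·σ_{g,f}·g. -/
noncomputable def Spoly (mo : MonomialOrder (Fin n)) (f g : MvPolynomial (Fin n) K) :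
    MvPolynomial (Fin n) K :=
  monomial (sigma mo f g) (lc mo g) * f - monomial (sigma mo g f) (lc mo f) * g

/-- `h` is a `t`-representation of `p` with respect to `G`. -/
def IsTRep (mo : MonomialOrder (Fin n)) {m : ℕ} (G : Fin m → MvPolynomial (Fin n) K)
    (p : MvPolynomial (Fin n) K) (t : Fin n →₀ ℕ) (h : Fin m → MvPolynomial (Fin n) K) :
    Prop :=
  p = ∑ i, h i * G i ∧ ∀ i, h i = 0 ∨ mo.toSyn (lexp mo (h i * G i)) ≤ mo.toSyn t

/-- `S(g_i, g_j)` has an S-representation with respect to `G`. -/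
def HasSRep (mo : MonomialOrder (Fin n)) {m : ℕ} (G : Fin m → MvPolynomial (Fin n) K)
    (i j : Fin m) : Prop :=
  ∃ t h, mo.toSyn t < mo.toSyn (lexp mo (G i) ⊔ lexp mo (G j)) ∧
    IsTRep mo G (Spoly mo (G i) (G j)) t h

/-- `p` reduces to zero with respect to `G`. -/
def ReducesToZero (mo : MonomialOrder (Fin n)) {m : ℕ}
    (G : Fin m → MvPolynomial (Fin n) K) (p : MvPolynomial (Fin n) K) : Prop :=
  p = 0 ∨ ∃ (r : ℕ) (e : Fin r → (Fin n →₀ ℕ)) (c : Fin r → K) (ν : Fin r → Fin m),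
    (∀ i, c i ≠ 0) ∧
    p = ∑ i, monomial (e i) (c i) * G (ν i) ∧
    ∀ i : Fin r, (e i + lexp mo (G (ν i))) ∈
      (p - ∑ j ∈ Finset.univ.filter (fun j => j < i),
        monomial (e j) (c j) * G (ν j)).support

/-- `G` is a Gröbner basis: the leading monomial of every nonzero element of the ideal
generated by `G` is divisible by the leading monomial of some `G i`. -/
def IsGroebner (mo : MonomialOrder (Fin n)) {m : ℕ}
    (G : Fin m → MvPolynomial (Fin n) K) : Prop :=
  ∀ p ∈ Ideal.span (Set.range G), p ≠ 0 → ∃ i, lexp mo (G i) ≤ lexp mo p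

/-- The Extended Criterion for a list of monomials (given as exponent vectors). -/
def EC {n : ℕ} {m : ℕ} (t : Fin (m + 1) → (Fin n →₀ ℕ)) : Prop :=
  (∀ k, (t 0 ⊓ t (Fin.last m)) ≤ t k) ∧
  ∀ x : Fin n, (t 0 ⊓ t (Fin.last m)) x = 0 ∨
    Monotone (fun i => t i x) ∨ Antitone (fun i => t i x)

end Paper

namespace Paper

set_option maxHeartbeats 1000000
section Aux
variable {n : ℕ} {K : Type*} [Field K]
variable (mo : MonomialOrder (Fin n))

lemma toSyn_lexp (p : MvPolynomial (Fin n) K) :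
    mo.toSyn (lexp mo p) = p.support.sup fun e => mo.toSyn e := by simp [lexp]

lemma le_toSyn_lexp {p : MvPolynomial (Fin n) K} {e : Fin n →₀ ℕ} (he : e ∈ p.support) :
    mo.toSyn e ≤ mo.toSyn (lexp mo p) := by
  rw [toSyn_lexp]; exact Finset.le_sup he

lemma lexp_mem_support {p : MvPolynomial (Fin n) K} (hp : p ≠ 0) :
    lexp mo p ∈ p.support := by
  obtain ⟨b, hb, hsup⟩ := Finset.exists_mem_eq_sup p.support
    (Finset.nonempty_iff_ne_empty.mpr (fun h => hp (MvPolynomial.support_eq_empty.mp h)))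
    (fun e => mo.toSyn e)
  have hbe : lexp mo p = b := by simp [lexp, hsup]
  rw [hbe]; exact hb

lemma lc_ne_zero {p : MvPolynomial (Fin n) K} (hp : p ≠ 0) : lc mo p ≠ 0 :=
  MvPolynomial.mem_support_iff.mp (lexp_mem_support mo hp)

lemma lexp_eq_of {p : MvPolynomial (Fin n) K} {E : Fin n →₀ ℕ} (hc : p.coeff E ≠ 0)
    (hb : ∀ e, mo.toSyn E < mo.toSyn e → p.coeff e = 0) : lexp mo p = E := by
  have hp : p ≠ 0 := fun h => hc (by simp [h])
  have h1 : mo.toSyn E ≤ mo.toSyn (lexp mo p) :=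
    le_toSyn_lexp mo (MvPolynomial.mem_support_iff.mpr hc)
  have h2 : mo.toSyn (lexp mo p) ≤ mo.toSyn E := by
    by_contra h
    push_neg at h
    exact MvPolynomial.mem_support_iff.mp (lexp_mem_support mo hp) (hb _ h)
  exact mo.toSyn.injective (le_antisymm h2 h1)

lemma coeff_lexp_add_lexp (p q : MvPolynomial (Fin n) K) :
    (p * q).coeff (lexp mo p + lexp mo q) = lc mo p * lc mo q := by
  classical
  rw [MvPolynomial.coeff_mul]
  refine Finset.sum_eq_single_of_mem (lexp mo p, lexp mo q)
    (Finset.HasAntidiagonal.mem_antidiagonal.mpr rfl) ?_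
  rintro ⟨a, b⟩ hab hne
  rw [Finset.HasAntidiagonal.mem_antidiagonal] at hab
  by_contra hc
  have ha : a ∈ p.support := MvPolynomial.mem_support_iff.mpr (left_ne_zero_of_mul hc)
  have hb : b ∈ q.support := MvPolynomial.mem_support_iff.mpr (right_ne_zero_of_mul hc)
  have h1 := le_toSyn_lexp mo ha
  have h2 := le_toSyn_lexp mo hb
  have hsum : mo.toSyn a + mo.toSyn b = mo.toSyn (lexp mo p) + mo.toSyn (lexp mo q) := by
    rw [← map_add, ← map_add, hab]
  have ha' : a = lexp mo p := by
    refine mo.toSyn.injective (le_antisymm h1 ?_)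
    have h3 : mo.toSyn (lexp mo p) + mo.toSyn b ≤ mo.toSyn a + mo.toSyn b := by
      rw [hsum]; exact add_le_add le_rfl h2
    exact le_of_add_le_add_right h3
  have hb' : b = lexp mo q := by
    apply mo.toSyn.injective
    rw [ha'] at hsum
    exact add_left_cancel hsum
  exact hne (by rw [ha', hb'])

lemma lexp_mul {p q : MvPolynomial (Fin n) K} (hp : p ≠ 0) (hq : q ≠ 0) :
    lexp mo (p * q) = lexp mo p + lexp mo q := by
  classical
  apply lexp_eq_of
  · rw [coeff_lexp_add_lexp]
    exact mul_ne_zero (lc_ne_zero mo hp) (lc_ne_zero mo hq)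
  · intro e he
    by_contra hc
    have hmem : e ∈ (p * q).support := MvPolynomial.mem_support_iff.mpr hc
    have hmm := MvPolynomial.support_mul p q hmem
    rw [Finset.mem_add] at hmm
    obtain ⟨a, ha, b, hb, rfl⟩ := hmm
    have hle : mo.toSyn (a + b) ≤ mo.toSyn (lexp mo p + lexp mo q) := by
      rw [map_add, map_add]
      exact add_le_add (le_toSyn_lexp mo ha) (le_toSyn_lexp mo hb)
    exact absurd he (not_lt.mpr hle)

lemma lc_mul {p q : MvPolynomial (Fin n) K} (hp : p ≠ 0) (hq : q ≠ 0) :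
    lc mo (p * q) = lc mo p * lc mo q := by
  rw [lc, lexp_mul mo hp hq, coeff_lexp_add_lexp]

lemma support_one : (1 : MvPolynomial (Fin n) K).support = {0} := by
  classical
  rw [← MvPolynomial.C_1, MvPolynomial.C_apply, MvPolynomial.support_monomial]
  simp

lemma lexp_one : lexp mo (1 : MvPolynomial (Fin n) K) = 0 := by
  simp [lexp, support_one]

lemma lc_one : lc mo (1 : MvPolynomial (Fin n) K) = 1 := by
  simp [lc, lexp_one]

lemma prod_props {ι : Type*} (s : Finset ι) (f : ι → MvPolynomial (Fin n) K)
    (hf : ∀ i ∈ s, f i ≠ 0) :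
    (∏ i ∈ s, f i) ≠ 0 ∧ lexp mo (∏ i ∈ s, f i) = ∑ i ∈ s, lexp mo (f i) ∧
      lc mo (∏ i ∈ s, f i) = ∏ i ∈ s, lc mo (f i) := by
  classical
  induction s using Finset.cons_induction with
  | empty => exact ⟨one_ne_zero, by simp [lexp_one], by simp [lc_one]⟩
  | cons a s ha ih =>
    have hfa : f a ≠ 0 := hf a (Finset.mem_cons_self a s)
    obtain ⟨h1, h2, h3⟩ := ih (fun i hi => hf i (Finset.mem_cons_of_mem hi))
    rw [Finset.prod_cons, Finset.prod_cons, Finset.sum_cons]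
    refine ⟨mul_ne_zero hfa h1, by rw [lexp_mul mo hfa h1, h2], ?_⟩
    rw [lc_mul mo hfa h1, h3]

lemma support_prod {ι : Type*} (s : Finset ι) (f : ι → MvPolynomial (Fin n) K)
    {e : Fin n →₀ ℕ} (he : e ∈ (∏ i ∈ s, f i).support) :
    ∃ d : ι → (Fin n →₀ ℕ), (∀ i ∈ s, d i ∈ (f i).support) ∧ e = ∑ i ∈ s, d i := by
  classical
  induction s using Finset.cons_induction generalizing e with
  | empty =>
    refine ⟨fun _ => 0, by simp, ?_⟩
    rw [Finset.prod_empty, support_one, Finset.mem_singleton] at he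
    simp [he]
  | cons a s ha ih =>
    rw [Finset.prod_cons] at he
    have hmm := MvPolynomial.support_mul _ _ he
    rw [Finset.mem_add] at hmm
    obtain ⟨u, hu, v, hv, rfl⟩ := hmm
    obtain ⟨d, hd, rfl⟩ := ih hv
    refine ⟨Function.update d a u, ?_, ?_⟩
    · intro i hi
      rcases Finset.mem_cons.mp hi with rfl | hi
      · rw [Function.update_self]; exact hu
      · rw [Function.update_of_ne (fun h => ha (by rw [← h]; exact hi))]; exact hd i hi
    · rw [Finset.sum_cons, Function.update_self]
      congr 1
      exact Finset.sum_congr rfl fun i hi =>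
        (Function.update_of_ne (fun h => ha (by rw [← h]; exact hi)) _ _).symm

lemma tele {m : ℕ} (a : Fin (m + 1) → ℕ) (f : Fin m → ℕ)
    (h : ∀ k : Fin m, f k + a k.castSucc = a k.succ) :
    (∑ k, f k) + a 0 = a (Fin.last m) := by
  induction m with
  | zero => simp [Fin.last]
  | succ m ih =>
    rw [Fin.sum_univ_castSucc]
    have ih2 := ih (fun i => a i.castSucc) (fun k => f k.castSucc) (fun k => by
      have hk := h k.castSucc
      rwa [Fin.succ_castSucc] at hk)
    have hl := h (Fin.last m)
    rw [Fin.succ_last] at hl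
    simp only [Fin.castSucc_zero] at ih2
    simp only [Nat.succ_eq_add_one] at ih2 hl ⊢
    omega

lemma perm_eq_one {m : ℕ} (σ : Equiv.Perm (Fin m))
    (h : ∀ i, σ i = i ∨ ((σ i : ℕ) = (i : ℕ) + 1)) : σ = 1 := by
  have hle : ∀ i : Fin m, (i : ℕ) ≤ ((σ i : ℕ)) := by
    intro i
    rcases h i with h1 | h1
    · rw [h1]
    · omega
  have hsum : ∑ i : Fin m, ((σ i : ℕ)) = ∑ i : Fin m, (i : ℕ) :=
    Equiv.sum_comp σ (fun i => (i : ℕ))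
  have hpt := (Finset.sum_eq_sum_iff_of_le (fun i _ => hle i)).mp hsum.symm
  exact Equiv.ext fun i => Fin.ext (hpt i (Finset.mem_univ i)).symm

variable {n : ℕ} {K : Type*} [Field K]
variable (mo : MonomialOrder (Fin n))

lemma det_lexp {m : ℕ} (A : Matrix (Fin m) (Fin m) (MvPolynomial (Fin n) K))
    (w Λ δ : Fin m → (Fin n →₀ ℕ))
    (hδ : ∀ x, δ x + w x = Λ x)
    (hb : ∀ (x l : Fin m), ∀ e ∈ (A l x).support, mo.toSyn e + mo.toSyn (w l) ≤ mo.toSyn (Λ x))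
    (hs : ∀ (x l : Fin m), ¬(l = x ∨ ((l : ℕ) = (x : ℕ) + 1)) →
        ∀ e ∈ (A l x).support, mo.toSyn e + mo.toSyn (w l) < mo.toSyn (Λ x))
    (hd : ∀ x, (A x x).coeff (δ x) ≠ 0) :
    A.det ≠ 0 ∧ lexp mo A.det = ∑ x, δ x := by
  classical
  have hAne : ∀ x, A x x ≠ 0 := fun x h => hd x (by simp [h])
  have hdiag : ∀ x, lexp mo (A x x) = δ x := by
    intro x
    apply lexp_eq_of mo (hd x)
    intro e he
    by_contra hc
    have hmem : e ∈ (A x x).support := MvPolynomial.mem_support_iff.mpr hc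
    have h1 := hb x x e hmem
    rw [← hδ x, map_add] at h1
    exact absurd he (not_lt.mpr (le_of_add_le_add_right h1))
  obtain ⟨hprodne, hprodlexp, hprodlc⟩ :=
    prod_props mo Finset.univ (fun x => A x x) (fun x _ => hAne x)
  have hE : lexp mo (∏ x, A x x) = ∑ x, δ x := by
    rw [hprodlexp]; exact Finset.sum_congr rfl fun x _ => hdiag x
  have hσstrict : ∀ σ : Equiv.Perm (Fin m), σ ≠ 1 →
      ∀ e ∈ (∏ x, A (σ x) x).support, mo.toSyn e < mo.toSyn (∑ x, δ x) := by
    intro σ hσ1 e he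
    obtain ⟨d, hdm, rfl⟩ := support_prod Finset.univ _ he
    have hex : ∃ x : Fin m, ¬(σ x = x ∨ ((σ x : ℕ) = (x : ℕ) + 1)) := by
      by_contra hno
      push_neg at hno
      exact hσ1 (perm_eq_one σ hno)
    obtain ⟨x₀, hx₀⟩ := hex
    have hlt : ∑ x : Fin m, (mo.toSyn (d x) + mo.toSyn (w (σ x))) <
        ∑ x : Fin m, mo.toSyn (Λ x) := by
      apply Finset.sum_lt_sum
      · intro i _
        exact hb i (σ i) (d i) (hdm i (Finset.mem_univ i))
      · exact ⟨x₀, Finset.mem_univ x₀, hs x₀ (σ x₀) hx₀ (d x₀) (hdm x₀ (Finset.mem_univ x₀))⟩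
    have hL : ∑ x : Fin m, (mo.toSyn (d x) + mo.toSyn (w (σ x))) =
        mo.toSyn (∑ x, d x) + ∑ x : Fin m, mo.toSyn (w x) := by
      rw [Finset.sum_add_distrib, map_sum]
      congr 1
      exact Equiv.sum_comp σ (fun x => mo.toSyn (w x))
    have hR : ∑ x : Fin m, mo.toSyn (Λ x) =
        mo.toSyn (∑ x, δ x) + ∑ x : Fin m, mo.toSyn (w x) := by
      rw [map_sum, ← Finset.sum_add_distrib]
      exact Finset.sum_congr rfl fun x _ => by rw [← map_add, hδ x]
    rw [hL, hR] at hlt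
    exact lt_of_add_lt_add_right hlt
  have hdetc : ∀ e, A.det.coeff e =
      ∑ σ : Equiv.Perm (Fin m), (Equiv.Perm.sign σ : ℤ) • (∏ x, A (σ x) x).coeff e := by
    intro e
    rw [Matrix.det_apply, MvPolynomial.coeff_sum]
    exact Finset.sum_congr rfl fun σ _ => by
      rw [Units.smul_def, MvPolynomial.coeff_smul]
  have hc1 : A.det.coeff (∑ x, δ x) ≠ 0 := by
    rw [hdetc]
    rw [Finset.sum_eq_single_of_mem (1 : Equiv.Perm (Fin m)) (Finset.mem_univ 1)]
    · simp only [Equiv.Perm.sign_one, Units.val_one, one_smul, Equiv.Perm.one_apply]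
      have : (∏ x, A x x).coeff (∑ x, δ x) = ∏ x, lc mo (A x x) := by
        rw [← hE, ← hprodlc]; rfl
      rw [this]
      rw [Finset.prod_ne_zero_iff]
      intro x _
      rw [lc, hdiag x]
      exact hd x
    · intro σ _ hσ1
      have : (∏ x, A (σ x) x).coeff (∑ x, δ x) = 0 := by
        by_contra hcc
        exact absurd (hσstrict σ hσ1 _ (MvPolynomial.mem_support_iff.mpr hcc))
          (lt_irrefl _)
      rw [this, smul_zero]
  have hc2 : ∀ e, mo.toSyn (∑ x, δ x) < mo.toSyn e → A.det.coeff e = 0 := by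
    intro e he
    rw [hdetc]
    apply Finset.sum_eq_zero
    intro σ _
    rcases eq_or_ne σ 1 with rfl | hσ1
    · simp only [Equiv.Perm.one_apply]
      have : (∏ x, A x x).coeff e = 0 := by
        by_contra hcc
        have := le_toSyn_lexp mo (MvPolynomial.mem_support_iff.mpr hcc)
        rw [hE] at this
        exact absurd he (not_lt.mpr this)
      rw [this, smul_zero]
    · have : (∏ x, A (σ x) x).coeff e = 0 := by
        by_contra hcc
        have := hσstrict σ hσ1 _ (MvPolynomial.mem_support_iff.mpr hcc)
        exact absurd he (not_lt.mpr (le_of_lt this))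
      rw [this, smul_zero]
  exact ⟨fun h => hc1 (by simp [h]), lexp_eq_of mo hc1 hc2⟩


lemma exists_rel {m : ℕ} (mo : MonomialOrder (Fin n)) (hm : m ≠ 0)
    (G : Fin (m + 1) → MvPolynomial (Fin n) K)
    (hG : ∀ i, G i ≠ 0) (hchain : ∀ i : Fin m, HasSRep mo G i.castSucc i.succ) :
    ∃ P Q : MvPolynomial (Fin n) K, P ≠ 0 ∧
      G 0 * P + G (Fin.last m) * Q = 0 ∧
      lexp mo P = ∑ k : Fin m,
        ((lexp mo (G k.castSucc) ⊔ lexp mo (G k.succ)) - lexp mo (G k.castSucc)) := by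
  classical
  haveI : NeZero m := ⟨hm⟩
  simp only [HasSRep, IsTRep] at hchain
  choose t h hlt hEq hBnd using hchain
  set M : Fin m → Fin (m + 1) → MvPolynomial (Fin n) K := fun k i =>
    (if i = k.castSucc then
        monomial (sigma mo (G k.castSucc) (G k.succ)) (lc mo (G k.succ)) else 0)
    - (if i = k.succ then
        monomial (sigma mo (G k.succ) (G k.castSucc)) (lc mo (G k.castSucc)) else 0)
    - h k i with hM
  have hcs : ∀ k : Fin m, k.castSucc ≠ k.succ := fun k => (Fin.castSucc_lt_succ (i := k)).ne
  -- the relations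
  have hrel : ∀ k, ∑ i, G i * M k i = 0 := by
    intro k
    have e1 : ∑ i, G i * M k i
        = G k.castSucc * monomial (sigma mo (G k.castSucc) (G k.succ)) (lc mo (G k.succ))
          - G k.succ * monomial (sigma mo (G k.succ) (G k.castSucc)) (lc mo (G k.castSucc))
          - ∑ i, G i * h k i := by
      simp only [hM, mul_sub, Finset.sum_sub_distrib, mul_ite, mul_zero,
        Finset.sum_ite_eq', Finset.mem_univ, if_true]
    rw [e1]
    have e3 : ∑ i, G i * h k i = ∑ i, h k i * G i :=
      Finset.sum_congr rfl (fun i _ => mul_comm _ _)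
    rw [e3, ← hEq k]
    simp only [Spoly]
    ring
  -- notation
  set w : Fin m → (Fin n →₀ ℕ) := fun l => lexp mo (G l.castSucc) with hw
  set Λ : Fin m → (Fin n →₀ ℕ) :=
    fun x => lexp mo (G x.castSucc) ⊔ lexp mo (G x.succ) with hΛ
  set δ : Fin m → (Fin n →₀ ℕ) := fun x => Λ x - w x with hδdef
  have hδ : ∀ x, δ x + w x = Λ x := fun x =>
    tsub_add_cancel_of_le (le_sup_left : w x ≤ Λ x)
  have hsyncast : ∀ k : Fin m,
      mo.toSyn (sigma mo (G k.castSucc) (G k.succ)) + mo.toSyn (w k) = mo.toSyn (Λ k) := by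
    intro k
    rw [← map_add]
    congr 1
    exact tsub_add_cancel_of_le (le_sup_left)
  have hsynsucc : ∀ k : Fin m,
      mo.toSyn (sigma mo (G k.succ) (G k.castSucc)) + mo.toSyn (lexp mo (G k.succ))
        = mo.toSyn (Λ k) := by
    intro k
    rw [← map_add]
    congr 1
    simp only [hΛ]
    rw [sup_comm (lexp mo (G k.castSucc)) (lexp mo (G k.succ))]
    exact tsub_add_cancel_of_le le_sup_left
  -- bound for the h-part
  have hhb : ∀ (k : Fin m) (i : Fin (m + 1)), ∀ e ∈ (h k i).support,
      mo.toSyn e + mo.toSyn (lexp mo (G i)) < mo.toSyn (Λ k) := by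
    intro k i e he
    have hki : h k i ≠ 0 := fun h0 => by simp [h0] at he
    rcases hBnd k i with h0 | hle
    · exact absurd h0 hki
    have hmul := lexp_mul mo hki (hG i)
    have h1 : mo.toSyn e ≤ mo.toSyn (lexp mo (h k i)) := le_toSyn_lexp mo he
    have h2 : mo.toSyn (lexp mo (h k i)) + mo.toSyn (lexp mo (G i))
        = mo.toSyn (lexp mo (h k i * G i)) := by rw [hmul, map_add]
    calc mo.toSyn e + mo.toSyn (lexp mo (G i))
        ≤ mo.toSyn (lexp mo (h k i)) + mo.toSyn (lexp mo (G i)) := add_le_add h1 le_rfl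
      _ = mo.toSyn (lexp mo (h k i * G i)) := h2
      _ ≤ mo.toSyn (t k) := hle
      _ < mo.toSyn (Λ k) := hlt k
  -- general entry bound
  have hMb : ∀ (k : Fin m) (i : Fin (m + 1)), ∀ e ∈ (M k i).support,
      mo.toSyn e + mo.toSyn (lexp mo (G i)) ≤ mo.toSyn (Λ k) := by
    intro k i e he
    simp only [hM] at he
    have h1 := MvPolynomial.support_sub (σ := Fin n) _ _ he
    rcases Finset.mem_union.mp h1 with h2 | h2
    · have h3 := MvPolynomial.support_sub (σ := Fin n) _ _ h2
      rcases Finset.mem_union.mp h3 with h4 | h4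
      · by_cases hik : i = k.castSucc
        · rw [if_pos hik] at h4
          have h5 := MvPolynomial.support_monomial_subset h4
          rw [Finset.mem_singleton] at h5
          subst h5
          subst hik
          exact le_of_eq (hsyncast k)
        · rw [if_neg hik] at h4
          simp at h4
      · by_cases hik : i = k.succ
        · rw [if_pos hik] at h4
          have h5 := MvPolynomial.support_monomial_subset h4
          rw [Finset.mem_singleton] at h5
          subst h5
          subst hik
          exact le_of_eq (hsynsucc k)
        · rw [if_neg hik] at h4
          simp at h4
    · exact le_of_lt (hhb k i e h2)
  -- strict entry bound off the two diagonals
  have hMs : ∀ (k : Fin m) (i : Fin (m + 1)), i ≠ k.castSucc → i ≠ k.succ →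
      ∀ e ∈ (M k i).support,
      mo.toSyn e + mo.toSyn (lexp mo (G i)) < mo.toSyn (Λ k) := by
    intro k i hik1 hik2 e he
    have hMi : M k i = - h k i := by
      simp only [hM, if_neg hik1, if_neg hik2]
      simp
    rw [hMi, MvPolynomial.support_neg] at he
    exact hhb k i e he
  -- diagonal coefficient
  have hMd : ∀ k : Fin m,
      (M k k.castSucc).coeff (sigma mo (G k.castSucc) (G k.succ)) ≠ 0 := by
    intro k
    have hMk : M k k.castSucc
        = monomial (sigma mo (G k.castSucc) (G k.succ)) (lc mo (G k.succ))
          - 0 - h k k.castSucc := by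
      simp only [hM, if_neg (hcs k)]
      simp
    rw [hMk]
    rw [MvPolynomial.coeff_sub, MvPolynomial.coeff_sub, MvPolynomial.coeff_monomial,
      if_pos rfl, MvPolynomial.coeff_zero]
    have hz : (h k k.castSucc).coeff (sigma mo (G k.castSucc) (G k.succ)) = 0 := by
      by_contra hcc
      have := hhb k k.castSucc _ (MvPolynomial.mem_support_iff.mpr hcc)
      rw [hsyncast k] at this
      exact lt_irrefl _ this
    rw [hz]
    simpa using lc_ne_zero mo (hG k.succ)
  -- the matrix
  set Cm : Matrix (Fin m) (Fin m) (MvPolynomial (Fin n) K) :=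
    Matrix.of (fun l x => M x (l.castSucc)) with hCm
  have hdet := det_lexp mo Cm w Λ δ hδ
    (fun x l e he => hMb x (l.castSucc) e he)
    (fun x l hlx e he => by
      refine hMs x (l.castSucc) ?_ ?_ e he
      · intro hcc
        exact hlx (Or.inl (Fin.castSucc_injective m hcc))
      · intro hcc
        apply hlx
        right
        have := congrArg Fin.val hcc
        simpa using this)
    (fun x => hMd x)
  obtain ⟨hPne, hPlexp⟩ := hdet
  refine ⟨Cm.det, (Cm.updateRow 0 (fun x => M x (Fin.last m))).det, hPne, ?_, ?_⟩
  · -- the relation  G 0 * P + G last * Q = 0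
    have hsum0 : (Cm.updateRow 0 (fun x => ∑ i, G i * M x i)).det = 0 := by
      apply Matrix.det_eq_zero_of_row_eq_zero 0
      intro j
      rw [Matrix.updateRow_self]
      exact hrel j
    have hexpand : (Cm.updateRow 0 (fun x => ∑ i, G i * M x i)).det
        = ∑ i, G i * (Cm.updateRow 0 (fun x => M x i)).det := by
      have h1 : (fun x => ∑ i, G i * M x i)
          = ∑ i : Fin (m + 1), (G i • fun x => M x i) := by
        funext x
        simp [Finset.sum_apply, Pi.smul_apply, smul_eq_mul]
      rw [h1]
      have h2 := (Matrix.detRowAlternating (R := MvPolynomial (Fin n) K)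
        (n := Fin m)).toMultilinearMap.map_update_sum Finset.univ 0
        (fun i => (G i • fun x => M x i)) Cm
      have h3 : (Cm.updateRow 0 (∑ i : Fin (m + 1), (G i • fun x => M x i))).det
          = ∑ i : Fin (m + 1),
            (Matrix.detRowAlternating (R := MvPolynomial (Fin n) K) (n := Fin m))
              (Function.update Cm 0 (G i • fun x => M x i)) := h2
      rw [h3]
      refine Finset.sum_congr rfl (fun i _ => ?_)
      have h4 : (Matrix.detRowAlternating (R := MvPolynomial (Fin n) K) (n := Fin m))
          (Function.update Cm 0 (G i • fun x => M x i))
          = (Cm.updateRow 0 ((G i) • fun x => M x i)).det := rfl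
      rw [h4, Matrix.det_updateRow_smul]
    have hmid : ∀ i : Fin (m + 1), i ≠ 0 → i ≠ Fin.last m →
        G i * (Cm.updateRow 0 (fun x => M x i)).det = 0 := by
      intro i hi0 hil
      have hiv : (i : ℕ) < m := by
        have h1 : (i : ℕ) ≠ m := fun hc => hil (Fin.ext (by simpa using hc))
        have := i.isLt
        omega
      set l : Fin m := ⟨(i : ℕ), hiv⟩ with hl
      have hlne : l ≠ 0 := by
        intro hc
        apply hi0
        apply Fin.ext
        have := congrArg Fin.val hc
        exact this.trans (by simp)
      have hlcast : l.castSucc = i := by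
        apply Fin.ext
        simp [hl]
      have hrow : (Cm.updateRow 0 (fun x => M x i)) l = (fun x => M x i) := by
        rw [Matrix.updateRow_ne hlne]
        funext x
        rw [hCm]
        simp only [Matrix.of_apply]
        rw [hlcast]
      have hdet0 : (Cm.updateRow 0 (fun x => M x i)).det = 0 := by
        apply Matrix.det_zero_of_row_eq (Ne.symm hlne)
        rw [Matrix.updateRow_self, hrow]
      rw [hdet0, mul_zero]
    have hD0 : (Cm.updateRow 0 (fun x => M x (0 : Fin (m + 1)))).det = Cm.det := by
      have h0 : (fun x => M x (0 : Fin (m + 1))) = Cm 0 := by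
        funext x
        rw [hCm]
        simp only [Matrix.of_apply]
        congr 1
      rw [h0, Matrix.updateRow_eq_self]
    have h01 : (0 : Fin (m + 1)) ≠ Fin.last m := by
      intro hc
      have := congrArg Fin.val hc
      simp at this
      exact hm this.symm
    have hfinal : ∑ i, G i * (Cm.updateRow 0 (fun x => M x i)).det = 0 := by
      rw [← hexpand, hsum0]
    have hpair := Finset.sum_pair
      (f := fun i : Fin (m + 1) => G i * (Cm.updateRow 0 (fun x => M x i)).det) h01
    have hsub : ∑ i ∈ ({0, Fin.last m} : Finset (Fin (m + 1))),
          G i * (Cm.updateRow 0 (fun x => M x i)).det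
        = ∑ i, G i * (Cm.updateRow 0 (fun x => M x i)).det :=
      Finset.sum_subset (Finset.subset_univ _) (fun x _ hx => by
        simp only [Finset.mem_insert, Finset.mem_singleton] at hx
        push_neg at hx
        exact hmid x hx.1 hx.2)
    have hcomb : G 0 * (Cm.updateRow 0 (fun x => M x (0 : Fin (m + 1)))).det
        + G (Fin.last m) * (Cm.updateRow 0 (fun x => M x (Fin.last m))).det = 0 := by
      rw [← hpair, hsub, hfinal]
    rw [hD0] at hcomb
    exact hcomb
  · -- the leading exponent of P
    rw [hPlexp]

end Aux

end Paper



namespace Paper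

open MvPolynomial

/-- If the leading monomials of `G = (g_1, …, g_{m+1})` satisfy the Extended Criterion and
each consecutive S-polynomial has an S-representation with respect to `G`, then
`gcd(lt g_1, lt g_{m+1}) = lt(gcd(g_1, g_{m+1}))` (for any gcd `p` of `g_1` and `g_{m+1}`). -/
theorem chain_implies_gcd_commutes {n : ℕ} {K : Type*} [Field K]
    (mo : MonomialOrder (Fin n)) {m : ℕ}
    (G : Fin (m + 1) → MvPolynomial (Fin n) K) (hG : ∀ i, G i ≠ 0)
    (hEC : EC (fun i => lexp mo (G i)))
    (hchain : ∀ i : Fin m, HasSRep mo G i.castSucc i.succ)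
    (p : MvPolynomial (Fin n) K)
    (hp₁ : p ∣ G 0) (hpₘ : p ∣ G (Fin.last m))
    (hpgcd : ∀ q : MvPolynomial (Fin n) K, q ∣ G 0 → q ∣ G (Fin.last m) → q ∣ p) :
    lexp mo (G 0) ⊓ lexp mo (G (Fin.last m)) = lexp mo p := by
  classical
  rcases eq_or_ne m 0 with rfl | hm
  · -- the case of a single polynomial
    have hlast : (Fin.last 0 : Fin 1) = 0 := by
      apply Fin.ext; simp
    rw [hlast] at hpₘ hpgcd ⊢
    have h1 : G 0 ∣ p := hpgcd (G 0) dvd_rfl dvd_rfl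
    obtain ⟨u, hu⟩ := hp₁
    obtain ⟨v, hv⟩ := h1
    have hG0 := hG 0
    have hp0 : p ≠ 0 := fun hc => hG0 (by rw [hu, hc, zero_mul])
    have hu0 : u ≠ 0 := fun hc => hG0 (by rw [hu, hc, mul_zero])
    have hv0 : v ≠ 0 := fun hc => hp0 (by rw [hv, hc, mul_zero])
    have e1 : lexp mo (G 0) = lexp mo p + lexp mo u := by rw [hu]; exact lexp_mul mo hp0 hu0
    have e2 : lexp mo p = lexp mo (G 0) + lexp mo v := by rw [hv]; exact lexp_mul mo hG0 hv0
    ext x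
    rw [Finsupp.inf_apply]
    have e1x : lexp mo (G 0) x = lexp mo p x + lexp mo u x := by
      rw [e1, Finsupp.add_apply]
    have e2x : lexp mo p x = lexp mo (G 0) x + lexp mo v x := by
      rw [e2, Finsupp.add_apply]
    change min _ _ = _
    omega
  · obtain ⟨P, Q, hPne, hrel, hPlexp⟩ := exists_rel mo hm G hG hchain
    obtain ⟨u, hu⟩ := hp₁
    obtain ⟨v, hv⟩ := hpₘ
    have hp0 : p ≠ 0 := fun hc => hG 0 (by rw [hu, hc, zero_mul])
    have hu0 : u ≠ 0 := fun hc => hG 0 (by rw [hu, hc, mul_zero])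
    have hv0 : v ≠ 0 := fun hc => hG (Fin.last m) (by rw [hv, hc, mul_zero])
    have hrp : IsRelPrime v u := by
      intro d hdv hdu
      have h1 : p * d ∣ G 0 := by rw [hu]; exact mul_dvd_mul_left p hdu
      have h2 : p * d ∣ G (Fin.last m) := by rw [hv]; exact mul_dvd_mul_left p hdv
      have h3 : p * d ∣ p * 1 := by rw [mul_one]; exact hpgcd _ h1 h2
      exact isUnit_of_dvd_one ((mul_dvd_mul_iff_left hp0).mp h3)
    have hkey : u * P = v * (-Q) := by
      have h1 : p * (u * P) + p * (v * Q) = 0 := by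
        rw [hu, hv] at hrel
        calc p * (u * P) + p * (v * Q) = p * u * P + p * v * Q := by ring
          _ = 0 := hrel
      have h2 : p * (u * P + v * Q) = 0 := by rw [mul_add]; exact h1
      have h3 : u * P + v * Q = 0 := by
        rcases mul_eq_zero.mp h2 with hc | hc
        · exact absurd hc hp0
        · exact hc
      linear_combination h3
    have hdvd : v ∣ P := hrp.dvd_of_dvd_mul_left ⟨-Q, hkey⟩
    obtain ⟨s, hsP⟩ := hdvd
    have hs0 : s ≠ 0 := fun hc => hPne (by rw [hsP, hc, mul_zero])
    have hPv : lexp mo P = lexp mo v + lexp mo s := by rw [hsP]; exact lexp_mul mo hv0 hs0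
    have e1 : lexp mo (G 0) = lexp mo p + lexp mo u := by rw [hu]; exact lexp_mul mo hp0 hu0
    have e2 : lexp mo (G (Fin.last m)) = lexp mo p + lexp mo v := by
      rw [hv]; exact lexp_mul mo hp0 hv0
    obtain ⟨hEdiv, hEvar⟩ := hEC
    ext x
    rw [Finsupp.inf_apply]
    change min _ _ = _
    have e1x : lexp mo (G 0) x = lexp mo p x + lexp mo u x := by
      rw [e1, Finsupp.add_apply]
    have e2x : lexp mo (G (Fin.last m)) x = lexp mo p x + lexp mo v x := by
      rw [e2, Finsupp.add_apply]
    have hPx : lexp mo P x = lexp mo v x + lexp mo s x := by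
      rw [hPv, Finsupp.add_apply]
    have hEx : lexp mo P x = ∑ k : Fin m,
        ((lexp mo (G k.castSucc) ⊔ lexp mo (G k.succ)) x - lexp mo (G k.castSucc) x) := by
      rw [hPlexp, Finsupp.finset_sum_apply]
      exact Finset.sum_congr rfl fun k _ => by rw [Finsupp.tsub_apply]
    rcases hEvar x with hz | hmono | hanti
    · rw [Finsupp.inf_apply] at hz
      have hz2 : lexp mo (G 0) x ⊓ lexp mo (G (Fin.last m)) x = 0 := hz
      change min _ _ = 0 at hz2
      omega
    · have hcons : ∀ k : Fin m, lexp mo (G k.castSucc) x ≤ lexp mo (G k.succ) x :=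
        fun k => hmono (le_of_lt (Fin.castSucc_lt_succ (i := k)))
      have htel : (∑ k : Fin m,
            ((lexp mo (G k.castSucc) ⊔ lexp mo (G k.succ)) x - lexp mo (G k.castSucc) x))
          + lexp mo (G 0) x = lexp mo (G (Fin.last m)) x := by
        apply tele (fun i => lexp mo (G i) x)
        intro k
        have hk := hcons k
        rw [Finsupp.sup_apply]
        omega
      omega
    · have hcons : ∀ k : Fin m, lexp mo (G k.succ) x ≤ lexp mo (G k.castSucc) x :=
        fun k => hanti (le_of_lt (Fin.castSucc_lt_succ (i := k)))
      have hzero : ∑ k : Fin m,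
            ((lexp mo (G k.castSucc) ⊔ lexp mo (G k.succ)) x - lexp mo (G k.castSucc) x) = 0 :=
        Finset.sum_eq_zero fun k _ => by
          have hk := hcons k
          rw [Finsupp.sup_apply]
          omega
      have hlastle : lexp mo (G (Fin.last m)) x ≤ lexp mo (G 0) x := hanti (Fin.zero_le _)
      omega


end Paper
end
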